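/- Let Δ = 2^{−n} ∈ 2^{−ℕ}, let γ, γ_A, γ_B ∈ (0,1], let 𝐂 ≥ 1, and let ξ ∈ (0,1]. Let 𝒜, ℬ be collections of dyadic intervals of length Δ with |𝒜| = Δ^{−γ_A} and |ℬ| = Δ^{−γ_B}, and assume dist(I₁, I₂) ≥ Δ^ξ for all distinct I₁, I₂ ∈ ℬ. Let μ be a Borel probability measure on ℝ² with spt(μ) ⊂ (∪𝒜) × (∪ℬ) satisfying μ(Q) ≤ 𝐂·Δ^{γ_A + γ_B} for all dyadic squares Q of side 2^{−n}, and let ν be a Borel probability measure on [−1,1] satisfying ν(I) ≤ 𝐂·Δ^γ for all dyadic intervals I of length 2^{−n}. Then there is an absolute constant C > 0 such that ∫_{−1}^{1} ‖(π_c μ)^{(n)}‖_{L²}² dν(c) ≤ C·𝐂·max{Δ^{γ_A + γ_B − 1}, Δ^{γ − 1 − ξ}}. -/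

import Mathlib

open MeasureTheory Set Pointwise
open scoped ENNReal

/-- The dyadic interval of scale `r > 0` with index `k`, i.e. `[k·r, (k+1)·r)`. -/
def dyI (r : ℝ) (k : ℤ) : Set ℝ := Set.Ico ((k : ℝ) * r) (((k : ℝ) + 1) * r)

/-- The support of a measure: the set of points all of whose open neighbourhoods
have positive measure. -/
def mSupp {X : Type*} [TopologicalSpace X] [MeasurableSpace X] (ν : Measure X) : Set X :=
  {x : X | ∀ U : Set X, IsOpen U → x ∈ U → 0 < ν U}

/-- The squared `L²`-norm `‖θ^{(n)}‖_{L²}²` of the `2^{−n}`-discretisation of a measure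
`θ` on `ℝ`: since `θ^{(n)}` has density `θ(I_k)/2^{−n}` on each dyadic interval `I_k`
of length `2^{−n}`, its squared `L²`-norm equals `2^n · Σ_k θ(I_k)²`. -/
noncomputable def l2discSq (n : ℕ) (θ : Measure ℝ) : ℝ≥0∞ :=
  (2:ℝ≥0∞) ^ n * ∑' k : ℤ, (θ (dyI ((2:ℝ) ^ (-(n:ℤ))) k)) ^ 2

lemma mSupp_compl_null {X : Type*} [TopologicalSpace X] [MeasurableSpace X]
    [SecondCountableTopology X] (μ : Measure X) : μ (mSupp μ)ᶜ = 0 := by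
  have h : (mSupp μ)ᶜ ⊆ ⋃ U : {U : Set X // IsOpen U ∧ μ U = 0}, (U : Set X) := by
    intro x hx
    simp only [mSupp, mem_compl_iff, mem_setOf_eq, not_forall] at hx
    obtain ⟨U, hU, hxU, hpos⟩ := hx
    exact mem_iUnion.2 ⟨⟨U, hU, le_antisymm (not_lt.1 hpos) zero_le⟩, hxU⟩
  obtain ⟨t, htc, hteq⟩ := TopologicalSpace.isOpen_iUnion_countable
    (fun U : {U : Set X // IsOpen U ∧ μ U = 0} => (U : Set X)) (fun U => U.2.1)
  rw [← hteq] at h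
  exact measure_mono_null h ((measure_biUnion_null_iff htc).2 fun U _ => U.2.2)

lemma measurableSet_dyI (r : ℝ) (k : ℤ) : MeasurableSet (dyI r k) := measurableSet_Ico

lemma mem_dyI_iff {Δ : ℝ} (hΔ : 0 < Δ) {x : ℝ} {k : ℤ} :
    x ∈ dyI Δ k ↔ ⌊x / Δ⌋ = k := by
  rw [dyI, mem_Ico, Int.floor_eq_iff]
  constructor
  · rintro ⟨h1, h2⟩
    exact ⟨(le_div_iff₀ hΔ).2 (by linarith), by rw [div_lt_iff₀ hΔ]; push_cast; linarith⟩
  · rintro ⟨h1, h2⟩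
    rw [le_div_iff₀ hΔ] at h1; rw [div_lt_iff₀ hΔ] at h2
    constructor <;> push_cast at * <;> linarith

lemma dyI_disjoint {Δ : ℝ} (hΔ : 0 < Δ) : Pairwise (Function.onFun Disjoint (dyI Δ)) := by
  intro k k' hkk'
  refine Set.disjoint_left.2 fun x hx hx' => hkk' ?_
  rw [mem_dyI_iff hΔ] at hx hx'
  rw [← hx, ← hx']

lemma abs_sub_lt_of_mem_dyI {Δ : ℝ} (hΔ : 0 < Δ) {x y : ℝ} {k : ℤ}
    (hx : x ∈ dyI Δ k) (hy : y ∈ dyI Δ k) : |x - y| < Δ := by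
  rw [dyI, mem_Ico] at hx hy
  rw [abs_sub_lt_iff]; constructor <;> nlinarith [hx.1, hx.2, hy.1, hy.2]

/-- Covering an open interval by dyadic intervals. -/
lemma Ioo_subset_biUnion_dyI {Δ : ℝ} (hΔ : 0 < Δ) (a b : ℝ) :
    Set.Ioo a b ⊆ ⋃ k ∈ Finset.Icc ⌊a / Δ⌋ ⌊b / Δ⌋, dyI Δ k := by
  intro x hx
  refine mem_biUnion (Finset.mem_Icc.2 ⟨?_, ?_⟩) ((mem_dyI_iff hΔ).2 rfl)
  · refine Int.floor_le_floor ?_; gcongr; exact hx.1.le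
  · refine Int.floor_le_floor ?_; gcongr; exact hx.2.le

lemma measure_Ioo_le {Δ M : ℝ} (hΔ : 0 < Δ) (ν : Measure ℝ)
    (hν : ∀ k : ℤ, ν (dyI Δ k) ≤ ENNReal.ofReal M) (a b : ℝ) :
    ν (Set.Ioo a b) ≤ ((Finset.Icc ⌊a / Δ⌋ ⌊b / Δ⌋).card : ℝ≥0∞) * ENNReal.ofReal M := by
  calc ν (Set.Ioo a b) ≤ ν (⋃ k ∈ Finset.Icc ⌊a / Δ⌋ ⌊b / Δ⌋, dyI Δ k) :=
        measure_mono (Ioo_subset_biUnion_dyI hΔ a b)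
    _ ≤ ∑ k ∈ Finset.Icc ⌊a / Δ⌋ ⌊b / Δ⌋, ν (dyI Δ k) := measure_biUnion_finset_le _ _
    _ ≤ ∑ _k ∈ Finset.Icc ⌊a / Δ⌋ ⌊b / Δ⌋, ENNReal.ofReal M := Finset.sum_le_sum fun k _ => hν k
    _ = _ := by rw [Finset.sum_const, nsmul_eq_mul]

/-- Cardinality bound for the dyadic cover of an interval. -/
lemma card_Icc_floor_le {Δ a b : ℝ} (hΔ : 0 < Δ) (hab : a ≤ b) :
    ((Finset.Icc ⌊a / Δ⌋ ⌊b / Δ⌋).card : ℝ) ≤ (b - a) / Δ + 2 := by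
  rw [Int.card_Icc]
  have h1 : (⌊b / Δ⌋ : ℝ) ≤ b / Δ := Int.floor_le _
  have h2 : a / Δ - 1 < (⌊a / Δ⌋ : ℝ) := by
    have := Int.lt_floor_add_one (a / Δ); linarith
  have h3 : (⌊a / Δ⌋ : ℤ) ≤ ⌊b / Δ⌋ := Int.floor_le_floor (by gcongr)
  have h4' : ((⌊b / Δ⌋ + 1 - ⌊a / Δ⌋).toNat : ℤ) = ⌊b / Δ⌋ + 1 - ⌊a / Δ⌋ :=
    Int.toNat_of_nonneg (by omega)
  have h4 : ((⌊b / Δ⌋ + 1 - ⌊a / Δ⌋).toNat : ℝ) = ((⌊b / Δ⌋ : ℝ) + 1 - ⌊a / Δ⌋) := by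
    exact_mod_cast congrArg (Int.cast : ℤ → ℝ) h4' 
  rw [h4]
  have h5 : b / Δ - a / Δ = (b - a) / Δ := by ring
  linarith

lemma measure_Ioo_le' {Δ M : ℝ} (hΔ : 0 < Δ) (hM : 0 ≤ M) (ν : Measure ℝ)
    (hν : ∀ k : ℤ, ν (dyI Δ k) ≤ ENNReal.ofReal M) {a b : ℝ} (hab : a ≤ b) :
    ν (Set.Ioo a b) ≤ ENNReal.ofReal (((b - a) / Δ + 2) * M) := by
  refine (measure_Ioo_le hΔ ν hν a b).trans ?_
  rw [← ENNReal.ofReal_natCast, ← ENNReal.ofReal_mul (by positivity)]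
  exact ENNReal.ofReal_le_ofReal (by
    have := card_Icc_floor_le hΔ hab (Δ := Δ)
    push_cast
    nlinarith [card_Icc_floor_le hΔ hab (Δ := Δ)])

/-- The set of `c` with `|u + c v| < Δ` is an interval of length `2Δ/|v|`. -/
lemma slice_eq_Ioo {u v Δ : ℝ} (hv : v ≠ 0) :
    {c : ℝ | |u + c * v| < Δ} = Set.Ioo (-(u/v) - Δ/|v|) (-(u/v) + Δ/|v|) := by
  ext c
  have hv' : 0 < |v| := abs_pos.2 hv
  simp only [mem_setOf_eq, mem_Ioo]
  have key : |u + c * v| = |v| * |c - (-(u/v))| := by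
    rw [← abs_mul]
    congr 1
    field_simp
    ring
  rw [key, ← lt_div_iff₀' hv', abs_sub_lt_iff]
  constructor <;> rintro ⟨h1, h2⟩ <;> constructor <;> linarith

/-- If `|x - y| < m·Δ` then the dyadic indices of `x` and `y` differ by at most `m`. -/
lemma floor_mem_Icc_of_abs_sub_lt {Δ x y : ℝ} (hΔ : 0 < Δ) {m : ℤ}
    (h : |x - y| < (m : ℝ) * Δ) :
    ⌊y / Δ⌋ ∈ Finset.Icc (⌊x / Δ⌋ - m) (⌊x / Δ⌋ + m) := by
  rw [abs_sub_lt_iff] at h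
  have hx1 : (⌊x / Δ⌋ : ℝ) * Δ ≤ x := (le_div_iff₀ hΔ).1 (Int.floor_le _)
  have hx2 : x < ((⌊x / Δ⌋ : ℝ) + 1) * Δ := (div_lt_iff₀ hΔ).1 (Int.lt_floor_add_one _)
  rw [Finset.mem_Icc]
  constructor
  · refine Int.le_floor.2 ?_
    push_cast
    rw [le_div_iff₀ hΔ]
    nlinarith [h.1, h.2]
  · have : ⌊y / Δ⌋ < ⌊x / Δ⌋ + m + 1 := by
      refine Int.floor_lt.2 ?_
      push_cast
      rw [div_lt_iff₀ hΔ]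
      nlinarith [h.1, h.2]
    omega

/-- The near-diagonal bound: the measure of a `(2Δ)×Δ`-neighbourhood of a point is at
most `15` times the maximal square measure. -/
lemma near_diag_bound {Δ M : ℝ} (hΔ : 0 < Δ) (μ : Measure (ℝ × ℝ))
    (hsq : ∀ j k : ℤ, μ (dyI Δ j ×ˢ dyI Δ k) ≤ ENNReal.ofReal M) (p : ℝ × ℝ) :
    μ {q : ℝ × ℝ | |p.1 - q.1| < 2 * Δ ∧ |p.2 - q.2| < Δ} ≤ 15 * ENNReal.ofReal M := by
  set s : Finset ℤ := Finset.Icc (⌊p.1 / Δ⌋ - 2) (⌊p.1 / Δ⌋ + 2) with hs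
  set t : Finset ℤ := Finset.Icc (⌊p.2 / Δ⌋ - 1) (⌊p.2 / Δ⌋ + 1) with ht
  have hsub : {q : ℝ × ℝ | |p.1 - q.1| < 2 * Δ ∧ |p.2 - q.2| < Δ} ⊆
      ⋃ j ∈ s, ⋃ k ∈ t, dyI Δ j ×ˢ dyI Δ k := by
    rintro q ⟨h1, h2⟩
    have hj : ⌊q.1 / Δ⌋ ∈ s := floor_mem_Icc_of_abs_sub_lt hΔ (m := 2) (by exact_mod_cast h1)
    have hk : ⌊q.2 / Δ⌋ ∈ t := floor_mem_Icc_of_abs_sub_lt hΔ (m := 1)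
      (by rw [Int.cast_one, one_mul]; exact h2)
    exact mem_biUnion hj (mem_biUnion hk ⟨(mem_dyI_iff hΔ).2 rfl, (mem_dyI_iff hΔ).2 rfl⟩)
  calc μ _ ≤ μ (⋃ j ∈ s, ⋃ k ∈ t, dyI Δ j ×ˢ dyI Δ k) := measure_mono hsub
    _ ≤ ∑ j ∈ s, μ (⋃ k ∈ t, dyI Δ j ×ˢ dyI Δ k) := measure_biUnion_finset_le _ _
    _ ≤ ∑ j ∈ s, ∑ k ∈ t, μ (dyI Δ j ×ˢ dyI Δ k) :=
        Finset.sum_le_sum fun j _ => measure_biUnion_finset_le _ _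
    _ ≤ ∑ j ∈ s, ∑ k ∈ t, ENNReal.ofReal M :=
        Finset.sum_le_sum fun j _ => Finset.sum_le_sum fun k _ => hsq j k
    _ = (s.card * t.card : ℕ) * ENNReal.ofReal M := by
        simp [Finset.sum_const, mul_assoc, nsmul_eq_mul]
    _ = 15 * ENNReal.ofReal M := by
        rw [hs, ht, Int.card_Icc, Int.card_Icc,
          show ⌊p.1 / Δ⌋ + 2 + 1 - (⌊p.1 / Δ⌋ - 2) = 5 by ring,
          show ⌊p.2 / Δ⌋ + 1 + 1 - (⌊p.2 / Δ⌋ - 1) = 3 by ring,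
          show Int.toNat 5 = 5 from rfl, show Int.toNat 3 = 3 from rfl]
        norm_num

lemma measurable_proj (c : ℝ) : Measurable (fun p : ℝ × ℝ => p.1 + c * p.2) :=
  measurable_fst.add (measurable_const.mul measurable_snd)

/-- Sum of squares of dyadic-interval masses of the projected measure is at most the
product measure of the diagonal strip. -/
lemma tsum_sq_le_strip {Δ : ℝ} (hΔ : 0 < Δ) (μ : Measure (ℝ × ℝ)) [SFinite μ] (c : ℝ) :
    ∑' k : ℤ, (Measure.map (fun p : ℝ × ℝ => p.1 + c * p.2) μ (dyI Δ k)) ^ 2 ≤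
      (μ.prod μ) {pq : (ℝ × ℝ) × (ℝ × ℝ) |
        |(pq.1.1 + c * pq.1.2) - (pq.2.1 + c * pq.2.2)| < Δ} := by
  set f : ℝ × ℝ → ℝ := fun p => p.1 + c * p.2 with hf
  have hfm : Measurable f := measurable_proj c
  have hmap : ∀ k : ℤ, Measure.map f μ (dyI Δ k) = μ (f ⁻¹' dyI Δ k) := fun k =>
    Measure.map_apply hfm (measurableSet_dyI Δ k)
  have hsq : ∀ k : ℤ, (Measure.map f μ (dyI Δ k)) ^ 2 =
      (μ.prod μ) ((f ⁻¹' dyI Δ k) ×ˢ (f ⁻¹' dyI Δ k)) := by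
    intro k
    rw [hmap, Measure.prod_prod, sq]
  rw [tsum_congr hsq]
  have hdisj : Pairwise (Function.onFun Disjoint
      fun k : ℤ => (f ⁻¹' dyI Δ k) ×ˢ (f ⁻¹' dyI Δ k)) := by
    intro k k' hkk'
    have := dyI_disjoint hΔ hkk'
    refine Set.disjoint_left.2 fun pq hpq hpq' => ?_
    exact Set.disjoint_left.1 this hpq.1 hpq'.1
  have hmeas : ∀ k : ℤ, MeasurableSet ((f ⁻¹' dyI Δ k) ×ˢ (f ⁻¹' dyI Δ k)) := fun k =>
    (hfm (measurableSet_dyI Δ k)).prod (hfm (measurableSet_dyI Δ k))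
  rw [← measure_iUnion hdisj hmeas]
  refine measure_mono ?_
  rintro ⟨p, q⟩ hpq
  obtain ⟨k, hk1, hk2⟩ := mem_iUnion.1 hpq
  exact abs_sub_lt_of_mem_dyI hΔ hk1 hk2

/-- Fubini/Tonelli swap for the measure of slices of an open set. -/
lemma lintegral_strip_swap {Δ : ℝ} (μ : Measure (ℝ × ℝ)) [SFinite μ]
    (ν : Measure ℝ) [IsFiniteMeasure ν] (s : Set ℝ) (hs : MeasurableSet s) :
    ∫⁻ c in s, (μ.prod μ) {pq : (ℝ × ℝ) × (ℝ × ℝ) |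
        |(pq.1.1 + c * pq.1.2) - (pq.2.1 + c * pq.2.2)| < Δ} ∂ν =
    ∫⁻ pq in Set.univ, ν (s ∩ {c : ℝ |
        |(pq.1.1 + c * pq.1.2) - (pq.2.1 + c * pq.2.2)| < Δ}) ∂(μ.prod μ) := by
  set E : Set (ℝ × ((ℝ × ℝ) × (ℝ × ℝ))) := {x |
    |(x.2.1.1 + x.1 * x.2.1.2) - (x.2.2.1 + x.1 * x.2.2.2)| < Δ} with hE
  have hEopen : IsOpen E := by
    have : Continuous fun x : ℝ × ((ℝ × ℝ) × (ℝ × ℝ)) =>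
        |(x.2.1.1 + x.1 * x.2.1.2) - (x.2.2.1 + x.1 * x.2.2.2)| := by fun_prop
    exact isOpen_lt this continuous_const
  have hEm : MeasurableSet E := hEopen.measurableSet
  have h1 : ∀ c : ℝ, (μ.prod μ) {pq : (ℝ × ℝ) × (ℝ × ℝ) |
      |(pq.1.1 + c * pq.1.2) - (pq.2.1 + c * pq.2.2)| < Δ} =
      ∫⁻ pq, E.indicator 1 (c, pq) ∂(μ.prod μ) := by
    intro c
    have hm : MeasurableSet {pq : (ℝ × ℝ) × (ℝ × ℝ) |
        |(pq.1.1 + c * pq.1.2) - (pq.2.1 + c * pq.2.2)| < Δ} :=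
      hEm.preimage measurable_prodMk_left
    rw [← lintegral_indicator_one hm]
    rfl
  have h2 : ∀ pq : (ℝ × ℝ) × (ℝ × ℝ), ν (s ∩ {c : ℝ |
      |(pq.1.1 + c * pq.1.2) - (pq.2.1 + c * pq.2.2)| < Δ}) =
      ∫⁻ c in s, E.indicator 1 (c, pq) ∂ν := by
    intro pq
    have hm : MeasurableSet {c : ℝ |
        |(pq.1.1 + c * pq.1.2) - (pq.2.1 + c * pq.2.2)| < Δ} :=
      hEm.preimage measurable_prodMk_right
    rw [← lintegral_indicator_one (hs.inter hm), ← lintegral_indicator hs _]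
    congr 1
    ext c
    by_cases hc : c ∈ s <;>
      by_cases hc2 : |pq.1.1 + c * pq.1.2 - (pq.2.1 + c * pq.2.2)| < Δ <;>
      simp [Set.indicator_apply, hc, hc2, Set.mem_inter_iff, E]
  simp only [h1, h2, Measure.restrict_univ]
  exact lintegral_lintegral_swap ((measurable_one.indicator hEm).aemeasurable)

/-- **Lemma (elementary projection estimate, `L²` version).**
There is an absolute constant `C > 0` such that the following holds. Let `Δ = 2^{−n}`,
`γ, γ_A, γ_B ∈ (0,1]`, `𝐂 ≥ 1`, `ξ ∈ (0,1]`. Let `𝒜, ℬ` be collections of dyadic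
`Δ`-intervals with `|𝒜| = Δ^{−γ_A}`, `|ℬ| = Δ^{−γ_B}`, the intervals of `ℬ` being
`Δ^ξ`-separated. Let `μ` be a probability measure on `(∪𝒜) × (∪ℬ)` with
`μ(Q) ≤ 𝐂·Δ^{γ_A+γ_B}` for all dyadic `Δ`-squares `Q`, and let `ν` be a probability
measure on `[−1,1]` with `ν(I) ≤ 𝐂·Δ^γ` for all dyadic `Δ`-intervals `I`. Then
`∫_{−1}^{1} ‖(π_c μ)^{(n)}‖_{L²}² dν(c) ≤ C·𝐂·max{Δ^{γ_A+γ_B−1}, Δ^{γ−1−ξ}}`. -/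
theorem lemma3 :
    ∃ C : ℝ, 0 < C ∧
    ∀ (n : ℕ) (Δ : ℝ), Δ = (2:ℝ) ^ (-(n:ℤ)) →
    ∀ γ γA γB : ℝ, γ ∈ Set.Ioc (0:ℝ) 1 → γA ∈ Set.Ioc (0:ℝ) 1 → γB ∈ Set.Ioc (0:ℝ) 1 →
    ∀ CC : ℝ, 1 ≤ CC → ∀ ξ : ℝ, ξ ∈ Set.Ioc (0:ℝ) 1 →
    ∀ 𝒜 ℬ : Set ℤ, (𝒜.ncard : ℝ) = Δ ^ (-γA) → (ℬ.ncard : ℝ) = Δ ^ (-γB) →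
    (∀ k₁ ∈ ℬ, ∀ k₂ ∈ ℬ, k₁ ≠ k₂ →
      ∀ x ∈ dyI Δ k₁, ∀ y ∈ dyI Δ k₂, Δ ^ ξ ≤ |x - y|) →
    ∀ μ : Measure (ℝ × ℝ), IsProbabilityMeasure μ →
    mSupp μ ⊆ (⋃ k ∈ 𝒜, dyI Δ k) ×ˢ (⋃ k ∈ ℬ, dyI Δ k) →
    (∀ k₁ k₂ : ℤ, μ (dyI Δ k₁ ×ˢ dyI Δ k₂) ≤ ENNReal.ofReal (CC * Δ ^ (γA + γB))) →
    ∀ ν : Measure ℝ, IsProbabilityMeasure ν → mSupp ν ⊆ Set.Icc (-1) 1 →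
    (∀ k : ℤ, ν (dyI Δ k) ≤ ENNReal.ofReal (CC * Δ ^ γ)) →
    ∫⁻ c in Set.Icc (-1:ℝ) 1,
        l2discSq n (Measure.map (fun p : ℝ × ℝ => p.1 + c * p.2) μ) ∂ν
      ≤ ENNReal.ofReal (C * CC * max (Δ ^ (γA + γB - 1)) (Δ ^ (γ - 1 - ξ))) := by
  refine ⟨19, by norm_num, ?_⟩
  intro n Δ hΔdef γ γA γB hγ hγA hγB CC hCC ξ hξ 𝒜 ℬ hA hB hsep μ hμ hμsupp hμsq ν hν hνsupp hνfr
  have hΔ0 : 0 < Δ := hΔdef ▸ by positivity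
  have hΔ1 : Δ ≤ 1 := by
    rw [hΔdef]
    exact zpow_le_one_of_nonpos₀ (by norm_num) (by simp)
  have hCC0 : (0:ℝ) < CC := lt_of_lt_of_le one_pos hCC
  -- abbreviations
  set s : Set ℝ := Set.Icc (-1:ℝ) 1 with hs
  set D : Set ((ℝ × ℝ) × (ℝ × ℝ)) :=
    {pq | |pq.1.1 - pq.2.1| < 2 * Δ ∧ |pq.1.2 - pq.2.2| < Δ} with hD
  have hDmeas : MeasurableSet D := by
    have h1 : IsOpen {pq : (ℝ × ℝ) × (ℝ × ℝ) | |pq.1.1 - pq.2.1| < 2 * Δ} :=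
      isOpen_lt (((continuous_fst.comp continuous_fst).sub
        (continuous_fst.comp continuous_snd)).abs) continuous_const
    have h2 : IsOpen {pq : (ℝ × ℝ) × (ℝ × ℝ) | |pq.1.2 - pq.2.2| < Δ} :=
      isOpen_lt (((continuous_snd.comp continuous_fst).sub
        (continuous_snd.comp continuous_snd)).abs) continuous_const
    exact (h1.inter h2).measurableSet
  set K : ℝ≥0∞ := ENNReal.ofReal (4 * CC * Δ ^ (γ - ξ)) with hK
  -- the a.e. support statement
  set B : Set ℝ := ⋃ k ∈ ℬ, dyI Δ k with hBdef
  set S : Set (ℝ × ℝ) := (⋃ k ∈ 𝒜, dyI Δ k) ×ˢ B with hSdef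
  have hScompl : μ Sᶜ = 0 :=
    measure_mono_null (compl_subset_compl.2 hμsupp) (mSupp_compl_null μ)
  have haeS : ∀ᵐ pq ∂(μ.prod μ), pq.1 ∈ S ∧ pq.2 ∈ S := by
    rw [ae_iff]
    refine measure_mono_null (?_ : _ ⊆ (Sᶜ ×ˢ univ) ∪ (univ ×ˢ Sᶜ)) ?_
    · intro pq hpq
      simp only [mem_setOf_eq, not_and_or] at hpq
      rcases hpq with h | h
      · exact Or.inl ⟨h, trivial⟩
      · exact Or.inr ⟨trivial, h⟩
    · refine measure_union_null ?_ ?_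
      · rw [Measure.prod_prod, hScompl, zero_mul]
      · rw [Measure.prod_prod, hScompl, mul_zero]
  -- pointwise slice bound
  have hslice : ∀ pq : (ℝ × ℝ) × (ℝ × ℝ), pq.1 ∈ S → pq.2 ∈ S →
      ν (s ∩ {c : ℝ | |(pq.1.1 + c * pq.1.2) - (pq.2.1 + c * pq.2.2)| < Δ}) ≤
        D.indicator 1 pq + K := by
    rintro ⟨p, q⟩ hp hq
    set u : ℝ := p.1 - q.1 with hu
    set v : ℝ := p.2 - q.2 with hv
    have hset : {c : ℝ | |(p.1 + c * p.2) - (q.1 + c * q.2)| < Δ} =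
        {c : ℝ | |u + c * v| < Δ} := by
      ext c; simp only [mem_setOf_eq, hu, hv]; ring_nf
    rw [hset]
    by_cases hvsmall : |v| < Δ ^ ξ
    · -- same ℬ-interval, hence |v| < Δ
      obtain ⟨k₁, hk₁B, hk₁⟩ : ∃ k ∈ ℬ, p.2 ∈ dyI Δ k := by
        simpa [hBdef, mem_iUnion] using hp.2
      obtain ⟨k₂, hk₂B, hk₂⟩ : ∃ k ∈ ℬ, q.2 ∈ dyI Δ k := by
        simpa [hBdef, mem_iUnion] using hq.2
      have hkeq : k₁ = k₂ := by
        by_contra hne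
        exact absurd (hsep k₁ hk₁B k₂ hk₂B hne p.2 hk₁ q.2 hk₂) (not_le.2 hvsmall)
      have hvΔ : |v| < Δ := abs_sub_lt_of_mem_dyI hΔ0 hk₁ (hkeq ▸ hk₂)
      rcases Set.eq_empty_or_nonempty (s ∩ {c : ℝ | |u + c * v| < Δ}) with he | hne
      · rw [he, measure_empty]; exact zero_le
      · obtain ⟨c, hcs, hcv⟩ := hne
        have hc1 : |c| ≤ 1 := abs_le.2 ⟨hcs.1, hcs.2⟩
        have huD : |u| < 2 * Δ := by
          have h1 : |u + c * v| < Δ := hcv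
          have h2 : |c * v| ≤ |v| := by
            rw [abs_mul]
            calc |c| * |v| ≤ 1 * |v| := by gcongr
              _ = |v| := one_mul _
          calc |u| = |(u + c * v) + (-(c * v))| := by ring_nf
            _ ≤ |u + c * v| + |(-(c * v))| := abs_add_le _ _
            _ = |u + c * v| + |c * v| := by rw [abs_neg]
            _ < Δ + Δ := add_lt_add_of_lt_of_le h1 (h2.trans hvΔ.le)
            _ = 2 * Δ := by ring
        have hmemD : ((p, q) : (ℝ × ℝ) × (ℝ × ℝ)) ∈ D := ⟨huD, hvΔ⟩
        calc ν (s ∩ {c : ℝ | |u + c * v| < Δ}) ≤ ν univ := measure_mono (subset_univ _)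
          _ = 1 := measure_univ
          _ = D.indicator 1 (p, q) := by rw [Set.indicator_of_mem hmemD]; rfl
          _ ≤ D.indicator 1 (p, q) + K := le_self_add
    · -- separated case: use the Frostman bound on ν
      push_neg at hvsmall
      have hΔξ : (0:ℝ) < Δ ^ ξ := Real.rpow_pos_of_pos hΔ0 ξ
      have hv0 : v ≠ 0 := by
        intro h; rw [h, abs_zero] at hvsmall; linarith
      have habs : 0 < |v| := abs_pos.2 hv0
      refine le_trans (le_trans (measure_mono inter_subset_right) ?_) le_add_self
      rw [slice_eq_Ioo hv0]
      refine le_trans (measure_Ioo_le' hΔ0 (by positivity) ν hνfr (by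
        have : 0 < Δ / |v| := by positivity
        linarith)) ?_
      rw [hK]
      refine ENNReal.ofReal_le_ofReal ?_
      have hsim : (-(u/v) + Δ/|v| - (-(u/v) - Δ/|v|)) / Δ + 2 = 2 / |v| + 2 := by
        field_simp
        ring
      rw [hsim]
      have h1 : 2 / |v| + 2 ≤ 4 * (Δ ^ ξ)⁻¹ := by
        have h2 : 2 / |v| ≤ 2 * (Δ ^ ξ)⁻¹ := by
          rw [div_eq_mul_inv]
          gcongr
        have h3 : (1:ℝ) ≤ (Δ ^ ξ)⁻¹ := by
          rw [le_inv_comm₀ one_pos hΔξ, inv_one]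
          exact Real.rpow_le_one hΔ0.le hΔ1 hξ.1.le
        linarith
      calc (2 / |v| + 2) * (CC * Δ ^ γ) ≤ (4 * (Δ ^ ξ)⁻¹) * (CC * Δ ^ γ) := by
            have : 0 < CC * Δ ^ γ := by positivity
            nlinarith
        _ = 4 * CC * Δ ^ (γ - ξ) := by
            rw [Real.rpow_sub hΔ0]
            ring
  -- rewrite the integrand
  have hl2 : ∀ c : ℝ, l2discSq n (Measure.map (fun p : ℝ × ℝ => p.1 + c * p.2) μ) =
      (2:ℝ≥0∞) ^ n *
        ∑' k : ℤ, (Measure.map (fun p : ℝ × ℝ => p.1 + c * p.2) μ (dyI Δ k)) ^ 2 := by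
    intro c
    simp only [l2discSq]
    rw [← hΔdef]
  have h2top : ((2:ℝ≥0∞) ^ n) ≠ ⊤ := ENNReal.pow_ne_top ENNReal.ofNat_ne_top
  have hDbound : (μ.prod μ) D ≤ 15 * ENNReal.ofReal (CC * Δ ^ (γA + γB)) := by
    rw [Measure.prod_apply hDmeas]
    calc ∫⁻ p, μ (Prod.mk p ⁻¹' D) ∂μ
        ≤ ∫⁻ _p, 15 * ENNReal.ofReal (CC * Δ ^ (γA + γB)) ∂μ := by
          refine lintegral_mono fun p => ?_
          exact near_diag_bound hΔ0 μ hμsq p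
      _ = 15 * ENNReal.ofReal (CC * Δ ^ (γA + γB)) := by
          rw [lintegral_const, measure_univ, mul_one]
  calc ∫⁻ c in s, l2discSq n (Measure.map (fun p : ℝ × ℝ => p.1 + c * p.2) μ) ∂ν
      ≤ ∫⁻ c in s, (2:ℝ≥0∞) ^ n * (μ.prod μ) {pq : (ℝ × ℝ) × (ℝ × ℝ) |
          |(pq.1.1 + c * pq.1.2) - (pq.2.1 + c * pq.2.2)| < Δ} ∂ν := by
        refine lintegral_mono fun c => ?_
        rw [hl2 c]
        exact mul_le_mul_right (tsum_sq_le_strip hΔ0 μ c) _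
    _ = (2:ℝ≥0∞) ^ n * ∫⁻ c in s, (μ.prod μ) {pq : (ℝ × ℝ) × (ℝ × ℝ) |
          |(pq.1.1 + c * pq.1.2) - (pq.2.1 + c * pq.2.2)| < Δ} ∂ν :=
        lintegral_const_mul' _ _ h2top
    _ = (2:ℝ≥0∞) ^ n * ∫⁻ pq, ν (s ∩ {c : ℝ |
          |(pq.1.1 + c * pq.1.2) - (pq.2.1 + c * pq.2.2)| < Δ}) ∂(μ.prod μ) := by
        rw [lintegral_strip_swap μ ν s measurableSet_Icc, Measure.restrict_univ]
    _ ≤ (2:ℝ≥0∞) ^ n * ∫⁻ pq, (D.indicator 1 pq + K) ∂(μ.prod μ) := by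
        refine mul_le_mul_right (lintegral_mono_ae (haeS.mono fun pq h => ?_)) _
        exact hslice pq h.1 h.2
    _ = (2:ℝ≥0∞) ^ n * ((μ.prod μ) D + K) := by
        have : ∫⁻ pq, (D.indicator 1 pq + K) ∂(μ.prod μ) = (μ.prod μ) D + K := by
          rw [lintegral_add_left (measurable_one.indicator hDmeas),
            lintegral_indicator_one hDmeas, lintegral_const, measure_univ, mul_one]
        rw [this]
    _ ≤ (2:ℝ≥0∞) ^ n * (15 * ENNReal.ofReal (CC * Δ ^ (γA + γB)) + K) :=
        mul_le_mul_right (add_le_add_left hDbound _) _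
    _ ≤ ENNReal.ofReal (19 * CC * max (Δ ^ (γA + γB - 1)) (Δ ^ (γ - 1 - ξ))) := by
        have h15 : (15:ℝ≥0∞) * ENNReal.ofReal (CC * Δ ^ (γA + γB)) =
            ENNReal.ofReal (15 * (CC * Δ ^ (γA + γB))) := by
          rw [ENNReal.ofReal_mul (by norm_num : (0:ℝ) ≤ 15)]
          norm_num
        have h2n' : ((2:ℝ≥0∞) ^ n) = ENNReal.ofReal ((2:ℝ) ^ n) := by
          rw [ENNReal.ofReal_pow (by norm_num : (0:ℝ) ≤ 2)]
          norm_num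
        rw [h15, hK, h2n', ← ENNReal.ofReal_add (by positivity) (by positivity),
          ← ENNReal.ofReal_mul (by positivity)]
        refine ENNReal.ofReal_le_ofReal ?_
        have h2n : (2:ℝ) ^ n = Δ⁻¹ := by
          rw [hΔdef, zpow_neg, inv_inv, zpow_natCast]
        have hpow : ∀ a : ℝ, Δ⁻¹ * Δ ^ a = Δ ^ (a - 1) := by
          intro a
          rw [Real.rpow_sub hΔ0, Real.rpow_one]
          ring
        have hexp : Δ ^ (γ - ξ - 1) = Δ ^ (γ - 1 - ξ) := by
          congr 1
          ring
        have key : (2:ℝ) ^ n * (15 * (CC * Δ ^ (γA + γB)) + 4 * CC * Δ ^ (γ - ξ)) =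
            15 * CC * Δ ^ (γA + γB - 1) + 4 * CC * Δ ^ (γ - 1 - ξ) := by
          rw [h2n, ← hexp, ← hpow (γA + γB), ← hpow (γ - ξ)]
          ring
        rw [key]
        have hX : Δ ^ (γA + γB - 1) ≤ max (Δ ^ (γA + γB - 1)) (Δ ^ (γ - 1 - ξ)) :=
          le_max_left _ _
        have hY : Δ ^ (γ - 1 - ξ) ≤ max (Δ ^ (γA + γB - 1)) (Δ ^ (γ - 1 - ξ)) :=
          le_max_right _ _
        nlinarith [hX, hY, hCC0.le,
          mul_le_mul_of_nonneg_left hX (by positivity : (0:ℝ) ≤ 15 * CC),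
          mul_le_mul_of_nonneg_left hY (by positivity : (0:ℝ) ≤ 4 * CC)]
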